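/- Let S⃗ be a simple unit (1+k)-vector in R^{1+d} and let t denote the time coordinate function. Then |∇^S t|² + |p(S⃗)|² = 1, where ∇^S t is the projection of e0 onto span(S⃗) and p(S⃗) is the image of S⃗ under the (multilinear extension of the) spatial projection p(t,x) = x; here |·| denotes the mass norm of a k-vector. -/

import Mathlib

open scoped RealInnerProductSpace

noncomputable section

variable {d k : ℕ}

/-- The spatial projection p : ℝ^{1+d} → ℝ^d forgetting the time coordinate
(the coordinate of index 0). -/
def spatialProj (u : EuclideanSpace ℝ (Fin (d + 1))) : EuclideanSpace ℝ (Fin d) :=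
  WithLp.toLp 2 (fun j => u j.succ)

/-- The time unit vector e₀ ∈ ℝ^{1+d}. -/
def timeVec : EuclideanSpace ℝ (Fin (d + 1)) := EuclideanSpace.single 0 1

/-- Let `S⃗ = v₀ ∧ ⋯ ∧ v_k` be a simple unit (1+k)-vector in ℝ^{1+d}, given by
an orthonormal system `v`.  Then `|∇^S t|² + |p(S⃗)|² = 1`, where
`∇^S t = Σᵢ ⟨e₀, vᵢ⟩ vᵢ` is the orthogonal projection of `e₀` onto the span of
the `vᵢ`, and the squared mass norm of the simple k-vector
`p(S⃗) = p(v₀) ∧ ⋯ ∧ p(v_k)` is the Gram determinant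
`det (⟨p(vᵢ), p(vⱼ)⟩)ᵢⱼ`. -/
theorem sq_norm_gradS_add_sq_mass_spatialProj (v : Fin (k + 1) → EuclideanSpace ℝ (Fin (d + 1)))
    (hv : Orthonormal ℝ v) :
    ‖∑ i, ⟪(timeVec : EuclideanSpace ℝ (Fin (d + 1))), v i⟫ • v i‖ ^ 2 +
      Matrix.det (Matrix.of fun i j : Fin (k + 1) => ⟪spatialProj (v i), spatialProj (v j)⟫) = 1 := by
  set c : Fin (k + 1) → ℝ := fun i => v i 0 with hc
  have hinner : ∀ i, ⟪(timeVec : EuclideanSpace ℝ (Fin (d + 1))), v i⟫ = c i := by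
    intro i
    simp [timeVec, EuclideanSpace.inner_single_left, hc]
  have horth : ∀ i j, ⟪v i, v j⟫ = (if i = j then (1:ℝ) else 0) := fun i j =>
    orthonormal_iff_ite.mp hv i j
  -- norm term
  have hnorm : ‖∑ i, ⟪(timeVec : EuclideanSpace ℝ (Fin (d + 1))), v i⟫ • v i‖ ^ 2
      = ∑ i, c i ^ 2 := by
    simp_rw [hinner, ← real_inner_self_eq_norm_sq, inner_sum, real_inner_smul_right,
      sum_inner, real_inner_smul_left, horth]
    simp [sq]
  -- Gram entries
  have hgram : ∀ i j, ⟪spatialProj (v i), spatialProj (v j)⟫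
      = (if i = j then (1:ℝ) else 0) - c i * c j := by
    intro i j
    have h1 : ⟪v i, v j⟫ = ∑ m, v i m * v j m := by
      simp [PiLp.inner_apply, RCLike.inner_apply, mul_comm]
    have h2 : ⟪spatialProj (v i), spatialProj (v j)⟫ = ∑ m : Fin d, v i m.succ * v j m.succ := by
      simp [PiLp.inner_apply, RCLike.inner_apply, spatialProj, mul_comm]
    rw [h2, eq_sub_iff_add_eq, ← horth i j, h1, Fin.sum_univ_succ, hc]
    ring
  have hmat : (Matrix.of fun i j : Fin (k + 1) => ⟪spatialProj (v i), spatialProj (v j)⟫)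
      = 1 + Matrix.replicateCol (Fin 1) (fun i => -c i) * Matrix.replicateRow (Fin 1) c := by
    ext i j
    rw [Matrix.of_apply, hgram i j]
    simp [Matrix.one_apply, Matrix.mul_apply, sub_eq_add_neg]
  erw [hmat, Matrix.det_one_add_replicateCol_mul_replicateRow (ι := Fin 1), hnorm]
  simp [dotProduct, sq]
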